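/- arXiv:2403.18414 — 2 statements merged into one kernel-verified Lean document; each statement's English description precedes it below -/
import Mathlib

section
/- Let d ≥ 1 and for n ∈ ℕ set f_{n+1}(x) = ∏_{j=1}^d (V_{2^{n+1}}(x_j) − V_{2^n}(x_j)). Then there exist constants C₁, C₂ > 0 (independent of n) such that C₁·2^{nd} ≤ ‖f_{n+1}‖_{L_∞(ℝ^d)} ≤ C₂·2^{nd} for all n ∈ ℕ. -/
open MeasureTheory ENNReal Finset
open scoped RealInnerProductSpace

noncomputable section

/-- `d`-dimensional Euclidean space `ℝ^d`. -/
abbrev Ed (d : ℕ) := EuclideanSpace ℝ (Fin d)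

/-- The `l`-th difference of `f` at `x` with step `h`:
`Δ_h^l f(x) = ∑_{j=0}^l (-1)^{j+l} C(l,j) f(x + j h)`. -/
def deltal {d : ℕ} (l : ℕ) (h : Ed d) (f : Ed d → ℝ) (x : Ed d) : ℝ :=
  ∑ j ∈ Finset.range (l + 1), (-1 : ℝ) ^ (j + l) * (l.choose j) * f (x + (j : ℝ) • h)

/-- The `l`-th modulus of continuity of `f` in `L_p(ℝ^d)` (valued in `ℝ≥0∞`):
`Ω_l(f,t)_p = sup_{‖h‖ ≤ t} ‖Δ_h^l f‖_p`. -/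
def modCont (d l : ℕ) (p : ℝ≥0∞) (f : Ed d → ℝ) (t : ℝ) : ℝ≥0∞ :=
  ⨆ (h : Ed d) (_ : ‖h‖ ≤ t), eLpNorm (deltal l h f) p volume

/-- The generalized Nikol'skii–Besov norm `‖f‖_{B^Ω_{p,θ}(ℝ^d)}`, valued in `ℝ≥0∞`,
for `1 ≤ θ ≤ ∞` (`θ = ∞` uses the sup modification). -/
def besovNorm (d l : ℕ) (p θ : ℝ≥0∞) (Ω : ℝ → ℝ) (f : Ed d → ℝ) : ℝ≥0∞ :=
  eLpNorm f p volume +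
    if θ = ∞ then ⨆ (t : ℝ) (_ : 0 < t), modCont d l p f t / ENNReal.ofReal (Ω t)
    else (∫⁻ t in Set.Ioi (0 : ℝ),
      (modCont d l p f t / ENNReal.ofReal (Ω t)) ^ θ.toReal / ENNReal.ofReal t) ^ (1 / θ.toReal)

/-- The class `B^Ω_{p,θ}(ℝ^d)`: the unit ball of the generalized Besov norm in `L_p`. -/
def besovClass (d l : ℕ) (p θ : ℝ≥0∞) (Ω : ℝ → ℝ) : Set (Ed d → ℝ) :=
  {f | MemLp f p volume ∧ besovNorm d l p θ Ω f ≤ 1}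

/-- `Ω ∈ Φ_{α,l}`: a modulus-of-continuity-type function of order `l` satisfying the
Bari–Stechkin conditions `(S^α)` and `(S_l)`. -/
structure IsPhi (α : ℝ) (l : ℕ) (Ω : ℝ → ℝ) : Prop where
  cont : ContinuousOn Ω (Set.Ici 0)
  zero : Ω 0 = 0
  pos : ∀ t : ℝ, 0 < t → 0 < Ω t
  mono : MonotoneOn Ω (Set.Ici 0)
  subpoly : ∃ C : ℝ, 0 < C ∧ ∀ (n : ℕ) (t : ℝ), 0 < t → Ω (n * t) ≤ C * (n : ℝ) ^ l * Ω t
  salpha : ∃ C : ℝ, 0 < C ∧ ∀ τ₁ τ₂ : ℝ, 0 < τ₁ → τ₁ ≤ τ₂ → τ₂ ≤ 1 →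
    Ω τ₁ / τ₁ ^ α ≤ C * (Ω τ₂ / τ₂ ^ α)
  sl : ∃ γ : ℝ, 0 < γ ∧ γ < l ∧ ∃ C : ℝ, 0 < C ∧ ∀ τ₁ τ₂ : ℝ, 0 < τ₁ → τ₁ ≤ τ₂ → τ₂ ≤ 1 →
    C * (Ω τ₂ / τ₂ ^ ((l : ℝ) - γ)) ≤ Ω τ₁ / τ₁ ^ ((l : ℝ) - γ)

/-- The one-dimensional de la Vallée Poussin kernel
`V_{2^s}(t) = 2^{-s}(cos 2^s t − cos 2^{s+1} t)/t²`. -/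
def V1 (s : ℕ) (t : ℝ) : ℝ :=
  ((2 : ℝ) ^ s)⁻¹ * (Real.cos (2 ^ s * t) - Real.cos (2 ^ (s + 1) * t)) / t ^ 2

/-- The `d`-dimensional de la Vallée Poussin kernel
`V_{2^s}(x) = 2^{-sd} ∏_j (cos 2^s x_j − cos 2^{s+1} x_j)/x_j²`. -/
def Vd (d s : ℕ) (x : Ed d) : ℝ := ∏ j, V1 s (x j)

/-- De la Vallée Poussin means `σ_{2^s}(f,x) = π^{-d} ∫ V_{2^s}(x−u) f(u) du`. -/
def sigmaVP (d s : ℕ) (f : Ed d → ℝ) (x : Ed d) : ℝ :=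
  (Real.pi ^ d)⁻¹ * ∫ u : Ed d, Vd d s (x - u) * f u

/-- The dyadic blocks `q_0(f) = σ_1(f)`, `q_s(f) = σ_{2^s}(f) − σ_{2^{s−1}}(f)` for `s ≥ 1`. -/
def qVP (d : ℕ) (f : Ed d → ℝ) : ℕ → Ed d → ℝ
  | 0 => sigmaVP d 0 f
  | s + 1 => fun x => sigmaVP d (s + 1) f x - sigmaVP d s f x

/-- `𝕍_{n−1}(f) = ∑_{s=0}^{n-1} q_s(f)` (so `VPsum d n f` is the de la Vallée Poussin sum
appearing in `ℰ_n(f) = ‖f − 𝕍_{n−1}(f)‖`). -/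
def VPsum (d n : ℕ) (f : Ed d → ℝ) : Ed d → ℝ :=
  fun x => ∑ s ∈ Finset.range n, qVP d f s x

/-- `ℰ_n(B^Ω_{p,θ}(ℝ^d))_{L_q(ℝ^d)} = sup_{f ∈ B^Ω_{p,θ}} ‖f − 𝕍_{n−1}(f)‖_{L_q}`. -/
def calE (d l : ℕ) (p θ q : ℝ≥0∞) (Ω : ℝ → ℝ) (n : ℕ) : ℝ≥0∞ :=
  ⨆ f ∈ besovClass d l p θ Ω, eLpNorm (fun x => f x - VPsum d n f x) q volume

/-- One-dimensional Dirichlet kernel `D_m(u) = sin(mu)/u`. -/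
def D1 (m : ℕ) (u : ℝ) : ℝ := Real.sin (m * u) / u

/-- Multivariate Dirichlet kernel `D_m(x) = ∏_j sin(m x_j)/x_j`. -/
def Dd (d m : ℕ) (x : Ed d) : ℝ := ∏ j, D1 m (x j)

/-- Fourier means `S_{2^s}(f,x) = π^{-d} ∫ f(t) D_{2^s}(x−t) dt`. -/
def Sdir (d s : ℕ) (f : Ed d → ℝ) (x : Ed d) : ℝ :=
  (Real.pi ^ d)⁻¹ * ∫ t : Ed d, f t * Dd d (2 ^ s) (x - t)

/-- The blocks `f_{(0)} = S_1(f)`, `f_{(s)} = S_{2^s}(f) − S_{2^{s−1}}(f)` for `s ≥ 1`. -/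
def fdir (d : ℕ) (f : Ed d → ℝ) : ℕ → Ed d → ℝ
  | 0 => Sdir d 0 f
  | s + 1 => fun x => Sdir d (s + 1) f x - Sdir d s f x

/-- The partial Fourier sum `S_n(f) = ∑_{s=0}^n f_{(s)}`. -/
def SnSum (d n : ℕ) (f : Ed d → ℝ) : Ed d → ℝ :=
  fun x => ∑ s ∈ Finset.range (n + 1), fdir d f s x

/-- `ℰ'_n(B^Ω_{p,θ}(ℝ^d))_{L_q(ℝ^d)} = sup_{f ∈ B^Ω_{p,θ}} ‖f − S_n(f)‖_{L_q}`. -/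
def calE' (d l : ℕ) (p θ q : ℝ≥0∞) (Ω : ℝ → ℝ) (n : ℕ) : ℝ≥0∞ :=
  ⨆ f ∈ besovClass d l p θ Ω, eLpNorm (fun x => f x - SnSum d n f x) q volume

/-- The Fourier transform of a Schwartz function with the normalization
`(𝔉φ)(λ) = (2π)^{-d/2} ∫ φ(t) e^{-i⟨λ,t⟩} dt`. -/
def schwartzFT (d : ℕ) (φ : SchwartzMap (Ed d) ℂ) (lam : Ed d) : ℂ :=
  (((2 * Real.pi) ^ ((d : ℝ) / 2))⁻¹ : ℝ) *
    ∫ t : Ed d, φ t * Complex.exp (-Complex.I * (⟪lam, t⟫ : ℝ))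

/-- The tempered distribution Fourier transform of `g ∈ L_p(ℝ^d)`:
`⟨𝔉g, φ⟩ = ⟨g, 𝔉φ⟩ = ∫ g(x) (𝔉φ)(x) dx`. -/
def distFT (d : ℕ) (g : Ed d → ℝ) (φ : SchwartzMap (Ed d) ℂ) : ℂ :=
  ∫ x : Ed d, (g x : ℂ) * schwartzFT d φ x

/-- The support of a tempered distribution `T`: the complement of the union of all open
sets on which `T` vanishes. -/
def distSupport (d : ℕ) (T : SchwartzMap (Ed d) ℂ → ℂ) : Set (Ed d) :=
  {x | ¬ ∃ U : Set (Ed d), IsOpen U ∧ x ∈ U ∧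
      ∀ φ : SchwartzMap (Ed d) ℂ, tsupport (fun y => φ y) ⊆ U → T φ = 0}

/-- `μ_{2^s}`, the Fourier transform of the one-dimensional de la Vallée Poussin kernel. -/
def muVP (s : ℕ) (u : ℝ) : ℝ :=
  if |u| ≤ 2 ^ s then Real.sqrt (Real.pi / 2)
  else if |u| ≤ 2 ^ (s + 1) then
    Real.sqrt (Real.pi / 2) * (((2 : ℝ) ^ s)⁻¹ * (2 ^ (s + 1) - |u|))
  else 0

/-- The test function `f_{n+1}(x) = ∏_j (V_{2^{n+1}}(x_j) − V_{2^n}(x_j))`. -/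
def fV (d n : ℕ) (x : Ed d) : ℝ := ∏ j, (V1 (n + 1) (x j) - V1 n (x j))

/-- The decomposition (sequence-space) norm
`(∑_s (Ω(2^{-s})^{-1} ‖q_s(f)‖_p)^θ)^{1/θ}` (sup for `θ = ∞`). -/
def seqNorm (d : ℕ) (p θ : ℝ≥0∞) (Ω : ℝ → ℝ) (f : Ed d → ℝ) : ℝ≥0∞ :=
  if θ = ∞ then
    ⨆ s : ℕ, eLpNorm (qVP d f s) p volume / ENNReal.ofReal (Ω ((2 : ℝ) ^ (-(s : ℝ))))
  else (∑' s : ℕ,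
    (eLpNorm (qVP d f s) p volume / ENNReal.ofReal (Ω ((2 : ℝ) ^ (-(s : ℝ))))) ^ θ.toReal) ^
      (1 / θ.toReal)

end

section Aux

open Real

/-- Pointwise bound for the 1D kernel: `|V1 s t| ≤ (3/2)·2^s`. -/
lemma V1_abs_le (s : ℕ) (t : ℝ) : |V1 s t| ≤ 3 / 2 * 2 ^ s := by
  rcases eq_or_ne t 0 with rfl | ht
  · simp [V1]
  · have ht2 : (0 : ℝ) < t ^ 2 := by positivity
    have hcos : |Real.cos (2 ^ s * t) - Real.cos (2 ^ (s + 1) * t)| ≤ 3 / 2 * 2 ^ (2 * s) * t ^ 2 := by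
      rw [Real.cos_sub_cos]
      have h1 : |Real.sin ((2 ^ s * t + 2 ^ (s + 1) * t) / 2)| ≤ |(2 ^ s * t + 2 ^ (s + 1) * t) / 2| :=
        Real.abs_sin_le_abs
      have h2 : |Real.sin ((2 ^ s * t - 2 ^ (s + 1) * t) / 2)| ≤ |(2 ^ s * t - 2 ^ (s + 1) * t) / 2| :=
        Real.abs_sin_le_abs
      have e1 : |(2 ^ s * t + 2 ^ (s + 1) * t) / 2| = 3 / 2 * 2 ^ s * |t| := by
        rw [show (2 ^ s * t + 2 ^ (s + 1) * t) / 2 = 3 / 2 * 2 ^ s * t by ring, abs_mul]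
        congr 1
        rw [abs_of_nonneg]; positivity
      have e2 : |(2 ^ s * t - 2 ^ (s + 1) * t) / 2| = 1 / 2 * 2 ^ s * |t| := by
        rw [show (2 ^ s * t - 2 ^ (s + 1) * t) / 2 = -(1 / 2 * 2 ^ s * t) by ring, abs_neg, abs_mul]
        congr 1
        rw [abs_of_nonneg]; positivity
      rw [abs_mul, abs_mul, abs_neg, abs_two]
      have hs1 : |Real.sin ((2 ^ s * t + 2 ^ (s + 1) * t) / 2)| ≤ 3 / 2 * 2 ^ s * |t| := by
        rw [← e1]; exact h1
      have hs2 : |Real.sin ((2 ^ s * t - 2 ^ (s + 1) * t) / 2)| ≤ 1 / 2 * 2 ^ s * |t| := by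
        rw [← e2]; exact h2
      have habs : |t| ^ 2 = t ^ 2 := sq_abs t
      have hns1 : (0:ℝ) ≤ |Real.sin ((2 ^ s * t + 2 ^ (s + 1) * t) / 2)| := abs_nonneg _
      have hns2 : (0:ℝ) ≤ |Real.sin ((2 ^ s * t - 2 ^ (s + 1) * t) / 2)| := abs_nonneg _
      have h2s : ((2:ℝ)) ^ (2 * s) = 2 ^ s * 2 ^ s := by rw [two_mul, pow_add]
      nlinarith [abs_nonneg t, pow_pos (show (0:ℝ) < 2 by norm_num) s]
    unfold V1
    rw [abs_div, abs_mul, abs_of_nonneg (show (0:ℝ) ≤ ((2:ℝ) ^ s)⁻¹ by positivity),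
      abs_of_nonneg (show (0:ℝ) ≤ t ^ 2 by positivity)]
    rw [div_le_iff₀ ht2]
    calc ((2:ℝ) ^ s)⁻¹ * |Real.cos (2 ^ s * t) - Real.cos (2 ^ (s + 1) * t)|
        ≤ ((2:ℝ) ^ s)⁻¹ * (3 / 2 * 2 ^ (2 * s) * t ^ 2) := by
          apply mul_le_mul_of_nonneg_left hcos; positivity
      _ = 3 / 2 * 2 ^ s * t ^ 2 := by
          rw [two_mul, pow_add]; field_simp

/-- Quadratic lower bound for `N(a) = (3/2)cos 2a − (1/2)cos 4a − cos a` on `[1/8, 1/4]`. -/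
lemma N_ge (a : ℝ) (h1 : 1 / 8 ≤ a) (h2 : a ≤ 1 / 4) :
    a ^ 2 / 8 ≤ 3 / 2 * Real.cos (2 * a) - 1 / 2 * Real.cos (4 * a) - Real.cos a := by
  have ha : (0:ℝ) < a := by linarith
  have hb1 : |a| ≤ 1 := by rw [abs_of_pos ha]; linarith
  have hb2 : |2 * a| ≤ 1 := by rw [abs_of_pos (by linarith)]; linarith
  have hb4 : |4 * a| ≤ 1 := by rw [abs_of_pos (by linarith)]; linarith
  have c1 := Real.cos_bound hb1
  have c2 := Real.cos_bound hb2
  have c4 := Real.cos_bound hb4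
  rw [abs_le] at c1 c2 c4
  have e1 : |a| ^ 4 = a ^ 4 := by rw [abs_of_pos ha]
  have e2 : |2 * a| ^ 4 = 16 * a ^ 4 := by rw [abs_of_pos (by linarith : (0:ℝ) < 2 * a)]; ring
  have e4 : |4 * a| ^ 4 = 256 * a ^ 4 := by rw [abs_of_pos (by linarith : (0:ℝ) < 4 * a)]; ring
  rw [e1] at c1; rw [e2] at c2; rw [e4] at c4
  have haa : a ^ 2 ≤ 1 / 16 := by nlinarith
  have ha4 : a ^ 4 ≤ a ^ 2 / 16 := by nlinarith [mul_nonneg (sq_nonneg a) (sub_nonneg.mpr haa)]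
  nlinarith [c1.2, c2.1, c4.2, ha4, sq_nonneg a]

/-- Each factor of `fV` is at least `2^n/8` on the dyadic box. -/
lemma factor_ge (n : ℕ) (t : ℝ) (h1 : 1 / 8 ≤ 2 ^ n * t) (h2 : (2:ℝ) ^ n * t ≤ 1 / 4) :
    (2:ℝ) ^ n / 8 ≤ V1 (n + 1) t - V1 n t := by
  set a : ℝ := 2 ^ n * t with ha_def
  have hpn : (0:ℝ) < 2 ^ n := by positivity
  have ha : (0:ℝ) < a := by linarith
  have ht : (0:ℝ) < t := by
    by_contra h
    push_neg at h
    nlinarith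
  have key : V1 (n + 1) t - V1 n t
      = 2 ^ n * ((3 / 2 * Real.cos (2 * a) - 1 / 2 * Real.cos (4 * a) - Real.cos a) / a ^ 2) := by
    unfold V1
    have r1 : (2:ℝ) ^ (n + 1) * t = 2 * a := by rw [ha_def, pow_succ]; ring
    have r2 : (2:ℝ) ^ (n + 1 + 1) * t = 4 * a := by rw [ha_def, pow_succ, pow_succ]; ring
    rw [r1, r2]
    have ht2 : t ^ 2 ≠ 0 := by positivity
    have ha2 : a ^ 2 ≠ 0 := by positivity
    have hpn1 : ((2:ℝ) ^ (n+1)) ≠ 0 := by positivity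
    have hpn' : ((2:ℝ) ^ n) ≠ 0 := ne_of_gt hpn
    field_simp
    rw [ha_def]
    ring
  rw [key]
  have hN := N_ge a h1 h2
  have : (1:ℝ) / 8 ≤ (3 / 2 * Real.cos (2 * a) - 1 / 2 * Real.cos (4 * a) - Real.cos a) / a ^ 2 := by
    rw [le_div_iff₀ (by positivity)]
    nlinarith
  calc (2:ℝ) ^ n / 8 = 2 ^ n * (1 / 8) := by ring
    _ ≤ _ := by
        apply mul_le_mul_of_nonneg_left this (le_of_lt hpn)

end Aux


open MeasureTheory ENNReal in
/-- **Sup-norm of `f_{n+1}`:** `‖f_{n+1}‖_{L_∞(ℝ^d)} ≍ 2^{nd}`. -/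
theorem fV_Linfty_norm (d : ℕ) (hd : 1 ≤ d) :
    ∃ C₁ C₂ : ℝ, 0 < C₁ ∧ 0 < C₂ ∧ ∀ n : ℕ,
      ENNReal.ofReal (C₁ * (2 : ℝ) ^ ((n : ℝ) * d)) ≤ eLpNorm (fV d n) ∞ volume ∧
      eLpNorm (fV d n) ∞ volume ≤ ENNReal.ofReal (C₂ * (2 : ℝ) ^ ((n : ℝ) * d)) := by
  refine ⟨(1 / 8) ^ d, (9 / 2) ^ d, by positivity, by positivity, fun n => ?_⟩
  have h2nd : (2 : ℝ) ^ ((n : ℝ) * d) = (2 : ℝ) ^ (n * d) := by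
    rw [← Real.rpow_natCast 2 (n * d)]
    congr 1
    push_cast
    ring
  have hpn : (0:ℝ) < 2 ^ n := by positivity
  constructor
  · -- lower bound
    have hC : (1 / 8 : ℝ) ^ d * (2 : ℝ) ^ ((n : ℝ) * d) = ((2:ℝ) ^ n / 8) ^ d := by
      rw [h2nd, pow_mul, ← mul_pow]
      congr 1
      ring
    rw [hC]
    set c : ℝ := ((2:ℝ) ^ n / 8) ^ d with hc_def
    -- the open box
    set lo : ℝ := 1 / (8 * 2 ^ n) with hlo
    set hi : ℝ := 1 / (4 * 2 ^ n) with hhi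
    have hlohi : lo < hi := by
      rw [hlo, hhi]
      apply div_lt_div_of_pos_left one_pos (by positivity)
      nlinarith
    set U : Set (Ed d) := ⋂ j, (fun x : Ed d => x j) ⁻¹' Set.Ioo lo hi with hU
    have hUopen : IsOpen U := isOpen_iInter_of_finite fun j =>
      (isOpen_Ioo).preimage ((continuous_apply j).comp (PiLp.continuous_ofLp 2 _))
    have hUne : U.Nonempty := by
      refine ⟨(WithLp.toLp 2 (fun _ => (lo + hi) / 2 : Fin d → ℝ) : Ed d), ?_⟩
      simp only [hU, Set.mem_iInter, Set.mem_preimage, Set.mem_Ioo, PiLp.toLp_apply]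
      intro j
      constructor <;> linarith
    have hUpos : (0:ℝ≥0∞) < volume U := hUopen.measure_pos volume hUne
    have hbound : ∀ x ∈ U, c ≤ fV d n x := by
      intro x hx
      simp only [hU, Set.mem_iInter, Set.mem_preimage, Set.mem_Ioo] at hx
      have hfac : ∀ j : Fin d, (2:ℝ) ^ n / 8 ≤ V1 (n + 1) (x j) - V1 n (x j) := by
        intro j
        apply factor_ge
        · rw [show (1:ℝ)/8 = 2 ^ n * lo by rw [hlo]; field_simp]
          exact le_of_lt (mul_lt_mul_of_pos_left (hx j).1 hpn)
        · rw [show (1:ℝ)/4 = 2 ^ n * hi by rw [hhi]; field_simp]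
          exact le_of_lt (mul_lt_mul_of_pos_left (hx j).2 hpn)
      unfold fV
      rw [hc_def]
      refine le_trans (le_of_eq ?_)
        (Finset.prod_le_prod (f := fun _ : Fin d => (2:ℝ) ^ n / 8)
          (fun j _ => by positivity) (fun j _ => hfac j))
      simp [div_pow]
    by_contra hcon
    push_neg at hcon
    rw [eLpNorm_exponent_top] at hcon
    have hae := MeasureTheory.enorm_ae_le_eLpNormEssSup (fV d n) volume
    have hfreq : ∃ᵐ x ∂(volume : Measure (Ed d)), x ∈ U :=
      MeasureTheory.frequently_ae_mem_iff.2 (ne_of_gt hUpos)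
    obtain ⟨x, hxU, hxle⟩ := (hfreq.and_eventually hae).exists
    have h1 : ENNReal.ofReal c ≤ (‖fV d n x‖₊ : ℝ≥0∞) := by
      rw [← enorm_eq_nnnorm, ← ofReal_norm]
      apply ENNReal.ofReal_le_ofReal
      rw [Real.norm_eq_abs]
      exact le_trans (hbound x hxU) (le_abs_self _)
    exact absurd (h1.trans (hxle.trans hcon.le)) (by
      exact not_le_of_gt (lt_of_le_of_lt (h1.trans hxle) hcon) |>.elim ∘ fun h => h)
  · -- upper bound
    have hC : (9 / 2 : ℝ) ^ d * (2 : ℝ) ^ ((n : ℝ) * d) = ((9:ℝ) / 2 * 2 ^ n) ^ d := by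
      rw [h2nd, pow_mul, mul_pow]
    rw [hC, eLpNorm_exponent_top]
    apply MeasureTheory.eLpNormEssSup_le_of_ae_bound (C := ((9:ℝ) / 2 * 2 ^ n) ^ d)
    filter_upwards with x
    rw [Real.norm_eq_abs]
    unfold fV
    rw [Finset.abs_prod]
    refine le_trans (Finset.prod_le_prod (g := fun _ : Fin d => (9:ℝ) / 2 * 2 ^ n)
      (fun j _ => abs_nonneg _) (fun j _ => ?_)) (le_of_eq (by simp))
    calc |V1 (n + 1) (x j) - V1 n (x j)|
        ≤ |V1 (n + 1) (x j)| + |V1 n (x j)| := abs_sub _ _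
      _ ≤ 3 / 2 * 2 ^ (n + 1) + 3 / 2 * 2 ^ n := add_le_add (V1_abs_le _ _) (V1_abs_le _ _)
      _ = 9 / 2 * 2 ^ n := by rw [pow_succ]; ring
end

section
/- Let d ≥ 1, 1 ≤ p < ∞, and for n ∈ ℕ set f_{n+1}(x) = ∏_{j=1}^d (V_{2^{n+1}}(x_j) − V_{2^n}(x_j)). Then there exist constants C₁, C₂ > 0 (independent of n) such that C₁·2^{nd(1−1/p)} ≤ ‖f_{n+1}‖_{L_p(ℝ^d)} ≤ C₂·2^{nd(1−1/p)} for all n ∈ ℕ. -/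
open MeasureTheory ENNReal Finset
open scoped RealInnerProductSpace

noncomputable section FVAux

open MeasureTheory ENNReal Finset Real

/-- The rescaled profile `h(u) = V_{2}(u) - V_{1}(u)`. -/
private def hhV : ℝ → ℝ := fun u => V1 1 u - V1 0 u

private lemma hhV_meas : Measurable hhV := by unfold hhV V1; fun_prop

private lemma hhV_scale (n : ℕ) (t : ℝ) :
    V1 (n + 1) t - V1 n t = 2 ^ n * hhV (2 ^ n * t) := by
  rcases eq_or_ne t 0 with rfl | ht
  · simp [hhV, V1]
  · have h2n : (2 : ℝ) ^ n ≠ 0 := by positivity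
    unfold hhV V1
    field_simp
    ring_nf

private lemma hhV_eq (u : ℝ) :
    hhV u = (2⁻¹ * (Real.cos (2*u) - Real.cos (4*u)) - (Real.cos u - Real.cos (2*u))) / u ^ 2 := by
  unfold hhV V1
  norm_num
  ring_nf

private lemma hhV_bound (u : ℝ) : |hhV u| ≤ 11 * (1 + u ^ 2)⁻¹ := by
  rcases eq_or_ne u 0 with rfl | hu
  · simp [hhV, V1]
  · have hu2 : (0:ℝ) < u ^ 2 := by positivity
    have c1 : Real.cos (2*u) ≤ 1 := Real.cos_le_one _
    have c2 : Real.cos (4*u) ≤ 1 := Real.cos_le_one _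
    have c3 : Real.cos u ≤ 1 := Real.cos_le_one _
    have d1 : 1 - (2*u)^2/2 ≤ Real.cos (2*u) := Real.one_sub_sq_div_two_le_cos
    have d2 : 1 - (4*u)^2/2 ≤ Real.cos (4*u) := Real.one_sub_sq_div_two_le_cos
    have d3 : 1 - u^2/2 ≤ Real.cos u := Real.one_sub_sq_div_two_le_cos
    have e1 : Real.cos (2*u) ≥ -1 := Real.neg_one_le_cos _
    have e2 : Real.cos (4*u) ≥ -1 := Real.neg_one_le_cos _
    have e3 : Real.cos u ≥ -1 := Real.neg_one_le_cos _
    rw [hhV_eq u, ← div_eq_mul_inv, abs_div, abs_of_nonneg (le_of_lt hu2)]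
    have hN1 : |2⁻¹ * (Real.cos (2*u) - Real.cos (4*u)) - (Real.cos u - Real.cos (2*u))| ≤ 15/2 * u^2 := by
      rw [abs_le]; constructor <;> nlinarith
    have hN2 : |2⁻¹ * (Real.cos (2*u) - Real.cos (4*u)) - (Real.cos u - Real.cos (2*u))| ≤ 3 := by
      rw [abs_le]; constructor <;> nlinarith
    have hpos : (0:ℝ) < 1 + u^2 := by positivity
    rw [div_le_div_iff₀ hu2 hpos]
    nlinarith

private lemma lintegral_scale_aux (F : ℝ → ℝ≥0∞) (hF : Measurable F) (a : ℝ) (ha : a ≠ 0) :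
    ∫⁻ t, F (a * t) = ENNReal.ofReal |a⁻¹| * ∫⁻ t, F t := by
  rw [← smul_eq_mul, ← lintegral_smul_measure, ← Real.map_volume_mul_left ha,
    lintegral_map hF (measurable_const_mul a)]

private lemma hhV_int_lt_top (p : ℝ) (hp : 1 ≤ p) :
    ∫⁻ u, (‖hhV u‖₊ : ℝ≥0∞) ^ p < ∞ := by
  have h1 : ∀ u : ℝ, (‖hhV u‖₊ : ℝ≥0∞) ^ p ≤
      ENNReal.ofReal 11 ^ p * ENNReal.ofReal ((1 + u ^ 2)⁻¹) := by
    intro u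
    have e0 : (‖hhV u‖₊ : ℝ≥0∞) = ENNReal.ofReal |hhV u| := by
      rw [← Real.nnnorm_abs, ← Real.toNNReal_eq_nnnorm_of_nonneg (abs_nonneg _),
        ENNReal.ofReal]
    have e1 : (‖hhV u‖₊ : ℝ≥0∞) ≤ ENNReal.ofReal 11 * ENNReal.ofReal ((1 + u ^ 2)⁻¹) := by
      rw [e0, ← ENNReal.ofReal_mul (by norm_num)]
      exact ENNReal.ofReal_le_ofReal (hhV_bound u)
    calc (‖hhV u‖₊ : ℝ≥0∞) ^ p ≤ (ENNReal.ofReal 11 * ENNReal.ofReal ((1 + u ^ 2)⁻¹)) ^ p :=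
          ENNReal.rpow_le_rpow e1 (by linarith)
      _ = ENNReal.ofReal 11 ^ p * ENNReal.ofReal ((1 + u ^ 2)⁻¹) ^ p :=
          ENNReal.mul_rpow_of_nonneg _ _ (by linarith)
      _ ≤ ENNReal.ofReal 11 ^ p * ENNReal.ofReal ((1 + u ^ 2)⁻¹) := by
          gcongr
          calc ENNReal.ofReal ((1 + u ^ 2)⁻¹) ^ p ≤ ENNReal.ofReal ((1 + u ^ 2)⁻¹) ^ (1:ℝ) := by
                apply ENNReal.rpow_le_rpow_of_exponent_ge _ hp
                apply ENNReal.ofReal_le_one.2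
                rw [inv_le_one_iff₀]; right; nlinarith [sq_nonneg u]
            _ = _ := ENNReal.rpow_one _
  calc ∫⁻ u, (‖hhV u‖₊ : ℝ≥0∞) ^ p
      ≤ ∫⁻ u, ENNReal.ofReal 11 ^ p * ENNReal.ofReal ((1 + u ^ 2)⁻¹) := lintegral_mono h1
    _ = ENNReal.ofReal 11 ^ p * ∫⁻ u, ENNReal.ofReal ((1 + u ^ 2)⁻¹) :=
        lintegral_const_mul _ (by fun_prop)
    _ < ∞ := by
        apply ENNReal.mul_lt_top
        · exact ENNReal.rpow_lt_top_of_nonneg (by linarith) ENNReal.ofReal_ne_top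
        have hi := integrable_inv_one_add_sq.hasFiniteIntegral
        rw [hasFiniteIntegral_iff_norm] at hi
        have e : (fun u : ℝ => ENNReal.ofReal ((1 + u ^ 2)⁻¹)) =
            fun a => ENNReal.ofReal ‖(1 + a ^ 2)⁻¹‖ := by
          funext u
          rw [Real.norm_eq_abs, abs_of_nonneg (by positivity : (0:ℝ) ≤ (1 + u ^ 2)⁻¹)]
        rw [e]; exact hi

private lemma cos_four_pi' : Real.cos (4 * π) = 1 := by
  have := Real.cos_nat_mul_two_pi 2
  push_cast at this
  rw [show (4:ℝ) * π = 2 * (2 * π) by ring]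
  exact this

private lemma hhV_pi : hhV π = 2 / π ^ 2 := by
  unfold hhV V1
  norm_num [Real.cos_pi, Real.cos_two_pi, cos_four_pi']
  ring_nf

private lemma hhV_contAt : ContinuousAt hhV π := by
  unfold hhV V1
  apply ContinuousAt.sub <;>
  · apply ContinuousAt.div (by fun_prop) (by fun_prop)
    positivity

private lemma hhV_int_pos (p : ℝ) : 0 < ∫⁻ u, (‖hhV u‖₊ : ℝ≥0∞) ^ p := by
  rcases eq_or_ne (∫⁻ u, (‖hhV u‖₊ : ℝ≥0∞) ^ p) 0 with hJ | hJ
  · exfalso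
    have hmeas : Measurable fun u => (‖hhV u‖₊ : ℝ≥0∞) ^ p :=
      (hhV_meas.nnnorm.coe_nnreal_ennreal).pow_const p
    have hae := (lintegral_eq_zero_iff hmeas).1 hJ
    have hnull : volume {u : ℝ | ¬ ((‖hhV u‖₊ : ℝ≥0∞) ^ p = 0)} = 0 := hae
    have hU : {u : ℝ | 0 < hhV u} ∈ nhds π := by
      have : 0 < hhV π := by rw [hhV_pi]; positivity
      exact hhV_contAt.preimage_mem_nhds (isOpen_Ioi.mem_nhds this)
    obtain ⟨U, hUsub, hUopen, hπU⟩ := mem_nhds_iff.1 hU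
    have hvol : 0 < volume U := hUopen.measure_pos volume ⟨π, hπU⟩
    have hsub : U ⊆ {u : ℝ | ¬ ((‖hhV u‖₊ : ℝ≥0∞) ^ p = 0)} := by
      intro u hu
      have hpos : 0 < hhV u := hUsub hu
      simp only [Set.mem_setOf_eq, ENNReal.rpow_eq_zero_iff]
      push_neg
      constructor
      · intro hz
        exfalso
        rw [ENNReal.coe_eq_zero, nnnorm_eq_zero] at hz
        exact hpos.ne' hz
      · intro hz
        exact absurd hz ENNReal.coe_ne_top
    exact hvol.ne' (measure_mono_null hsub hnull)
  · exact hJ.bot_lt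

private lemma lintegral_pi_prod_aux (d : ℕ) (F : ℝ → ℝ≥0∞) (hF : Measurable F) :
    ∫⁻ x : Fin d → ℝ, ∏ j, F (x j) = (∫⁻ t, F t) ^ d := by
  induction d with
  | zero => simp [lintegral_const, volume_pi, Measure.pi_of_empty]
  | succ n ih =>
    have mp := (measurePreserving_piFinSuccAbove (fun _ : Fin (n+1) => (volume : Measure ℝ)) 0).symm
    have hG : Measurable fun x : Fin (n+1) → ℝ => ∏ j, F (x j) :=
      Finset.measurable_prod _ fun j _ => hF.comp (measurable_pi_apply j)
    rw [volume_pi, ← mp.lintegral_comp hG]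
    simp_rw [MeasurableEquiv.piFinSuccAbove_symm_apply, Fin.insertNthEquiv,
      Equiv.coe_fn_mk, Fin.prod_univ_succ, Fin.insertNth_zero, cast_eq,
      Fin.cons_zero, Fin.cons_succ]
    rw [lintegral_prod_mul (f := F) (g := fun y : Fin n → ℝ => ∏ j, F (y j))
      hF.aemeasurable
      (Finset.measurable_prod Finset.univ fun (j : Fin n) _ =>
        hF.comp (measurable_pi_apply j)).aemeasurable]
    rw [show (Measure.pi fun _ : Fin n => (volume : Measure ℝ)) = volume from (volume_pi).symm,
      ih, pow_succ, mul_comm]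

end FVAux

open MeasureTheory ENNReal in
/-- **`L_p`-norm of `f_{n+1}`:** for `1 ≤ p < ∞`, `‖f_{n+1}‖_{L_p(ℝ^d)} ≍ 2^{nd(1−1/p)}`. -/
theorem fV_Lp_norm (d : ℕ) (hd : 1 ≤ d) (p : ℝ) (hp : 1 ≤ p) :
    ∃ C₁ C₂ : ℝ, 0 < C₁ ∧ 0 < C₂ ∧ ∀ n : ℕ,
      ENNReal.ofReal (C₁ * (2 : ℝ) ^ ((n : ℝ) * d * (1 - 1 / p))) ≤
        eLpNorm (fV d n) (ENNReal.ofReal p) volume ∧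
      eLpNorm (fV d n) (ENNReal.ofReal p) volume ≤
        ENNReal.ofReal (C₂ * (2 : ℝ) ^ ((n : ℝ) * d * (1 - 1 / p))) := by
  have hppos : 0 < p := lt_of_lt_of_le one_pos hp
  have hpnn : 0 ≤ p := hppos.le
  have hP0 : ENNReal.ofReal p ≠ 0 := by
    simp only [ne_eq, ENNReal.ofReal_eq_zero, not_le]; exact hppos
  have hPtop : ENNReal.ofReal p ≠ ∞ := ENNReal.ofReal_ne_top
  have hPtoReal : (ENNReal.ofReal p).toReal = p := ENNReal.toReal_ofReal hpnn
  set J : ℝ≥0∞ := ∫⁻ u : ℝ, (‖hhV u‖₊ : ℝ≥0∞) ^ p with hJdef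
  have hJ0 : 0 < J := hhV_int_pos p
  have hJtop : J < ∞ := hhV_int_lt_top p hp
  set C : ℝ := (J ^ ((d : ℝ) * (1 / p))).toReal with hCdef
  have hJrpow_pos : 0 < J ^ ((d : ℝ) * (1 / p)) := ENNReal.rpow_pos hJ0 hJtop.ne
  have hJrpow_top : J ^ ((d : ℝ) * (1 / p)) ≠ ∞ :=
    ENNReal.rpow_ne_top_of_nonneg (by positivity) hJtop.ne
  have hC0 : 0 < C := ENNReal.toReal_pos hJrpow_pos.ne' hJrpow_top
  refine ⟨C, C, hC0, hC0, fun n => ?_⟩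
  have h2npos : (0:ℝ) < 2 ^ n := by positivity
  have hgmeas : Measurable fun t : ℝ => V1 (n+1) t - V1 n t := by unfold V1; fun_prop
  have hFmeas : Measurable fun t : ℝ => (‖V1 (n+1) t - V1 n t‖₊ : ℝ≥0∞) ^ p :=
    (hgmeas.nnnorm.coe_nnreal_ennreal).pow_const p
  have hhcomp_meas : Measurable fun t : ℝ => (‖hhV ((2:ℝ)^n * t)‖₊ : ℝ≥0∞) ^ p :=
    ((hhV_meas.comp (measurable_const_mul _)).nnnorm.coe_nnreal_ennreal).pow_const p
  have hconst : (‖(2:ℝ)^n‖₊ : ℝ≥0∞) = ENNReal.ofReal ((2:ℝ)^n) := by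
    rw [← Real.toNNReal_eq_nnnorm_of_nonneg h2npos.le]; rfl
  have hone : ∫⁻ t : ℝ, (‖V1 (n+1) t - V1 n t‖₊ : ℝ≥0∞) ^ p
      = ENNReal.ofReal ((2:ℝ) ^ ((n:ℝ) * (p - 1))) * J := by
    have e1 : (fun t : ℝ => (‖V1 (n+1) t - V1 n t‖₊ : ℝ≥0∞) ^ p)
        = fun t => ENNReal.ofReal (((2:ℝ)^n) ^ p) * (‖hhV ((2:ℝ)^n * t)‖₊ : ℝ≥0∞) ^ p := by
      funext t
      rw [hhV_scale n t, nnnorm_mul, ENNReal.coe_mul,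
        ENNReal.mul_rpow_of_nonneg _ _ hpnn, hconst, ENNReal.ofReal_rpow_of_pos h2npos]
    rw [e1, lintegral_const_mul _ hhcomp_meas,
      lintegral_scale_aux (fun u => (‖hhV u‖₊ : ℝ≥0∞) ^ p)
        ((hhV_meas.nnnorm.coe_nnreal_ennreal).pow_const p) _ h2npos.ne']
    rw [← hJdef, ← mul_assoc, ← ENNReal.ofReal_mul (by positivity)]
    congr 2
    rw [abs_of_pos (by positivity)]
    rw [← Real.rpow_natCast 2 n, ← Real.rpow_mul (by norm_num : (0:ℝ) ≤ 2),
      ← Real.rpow_neg (by norm_num : (0:ℝ) ≤ 2),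
      ← Real.rpow_add (by norm_num : (0:ℝ) < 2)]
    congr 1
    ring
  have hEd : ∫⁻ x : Ed d, (‖fV d n x‖₊ : ℝ≥0∞) ^ p
      = (∫⁻ t : ℝ, (‖V1 (n+1) t - V1 n t‖₊ : ℝ≥0∞) ^ p) ^ d := by
    have e2 : (fun x : Ed d => (‖fV d n x‖₊ : ℝ≥0∞) ^ p)
        = fun x => ∏ j : Fin d, (‖V1 (n+1) (x j) - V1 n (x j)‖₊ : ℝ≥0∞) ^ p := by
      funext x
      rw [fV, nnnorm_prod, ENNReal.coe_finset_prod, ← ENNReal.prod_rpow_of_nonneg hpnn]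
    rw [e2]
    have hGmeas : Measurable fun y : Fin d → ℝ =>
        ∏ j, (‖V1 (n+1) (y j) - V1 n (y j)‖₊ : ℝ≥0∞) ^ p :=
      Finset.measurable_prod _ fun j _ => hFmeas.comp (measurable_pi_apply j)
    calc ∫⁻ x : Ed d, ∏ j, (‖V1 (n+1) (x j) - V1 n (x j)‖₊ : ℝ≥0∞) ^ p
        = ∫⁻ y : Fin d → ℝ, ∏ j, (‖V1 (n+1) (y j) - V1 n (y j)‖₊ : ℝ≥0∞) ^ p :=
          (EuclideanSpace.volume_preserving_symm_measurableEquiv_toLp (Fin d)).lintegral_comp hGmeas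
      _ = (∫⁻ t : ℝ, (‖V1 (n+1) t - V1 n t‖₊ : ℝ≥0∞) ^ p) ^ d :=
          lintegral_pi_prod_aux d _ hFmeas
  have key : eLpNorm (fV d n) (ENNReal.ofReal p) volume
      = ENNReal.ofReal (C * (2:ℝ) ^ ((n : ℝ) * d * (1 - 1 / p))) := by
    rw [eLpNorm_eq_lintegral_rpow_enorm_toReal hP0 hPtop, hPtoReal]
    simp only [enorm_eq_nnnorm]
    rw [hEd, hone]
    rw [mul_pow, ← ENNReal.rpow_natCast (ENNReal.ofReal ((2:ℝ) ^ ((n:ℝ)*(p-1)))) d,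
      ← ENNReal.rpow_natCast J d,
      ENNReal.mul_rpow_of_nonneg _ _ (by positivity : (0:ℝ) ≤ 1/p),
      ← ENNReal.rpow_mul, ← ENNReal.rpow_mul]
    rw [ENNReal.ofReal_rpow_of_pos (by positivity),
      ← Real.rpow_mul (by norm_num : (0:ℝ) ≤ 2)]
    rw [show ((n:ℝ)*(p-1)) * ((d:ℝ)*(1/p)) = (n:ℝ) * d * (1 - 1/p) by field_simp]
    rw [show J ^ ((d:ℝ)*(1/p)) = ENNReal.ofReal C from (ENNReal.ofReal_toReal hJrpow_top).symm]
    rw [mul_comm (ENNReal.ofReal ((2:ℝ) ^ ((n:ℝ) * d * (1 - 1/p)))) (ENNReal.ofReal C),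
      ← ENNReal.ofReal_mul hC0.le]
  rw [key]
  exact ⟨le_rfl, le_rfl⟩
end
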